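/- There exists a 2-factorization of K_24 minus a perfect matching into exactly 9 C_3-factors and 2 C_4-factors. That is, (9,2) ∈ HWP(24; 3, 4). -/

import Mathlib

open SimpleGraph

/-- A `C_k`-factor: a spanning 2-regular subgraph all of whose connected
components (necessarily cycles) have exactly `k` vertices. -/
def IsCycleFactor {V : Type*} (H : SimpleGraph V) (k : ℕ) : Prop :=
  (∀ v : V, (H.neighborSet v).ncard = 2) ∧
  (∀ v : V, (H.connectedComponentMk v).supp.ncard = k)

/-- A 1-factor (perfect matching): every vertex has exactly one neighbour. -/
def IsOneFactor {V : Type*} (H : SimpleGraph V) : Prop :=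
  ∀ v : V, (H.neighborSet v).ncard = 1

/-- `F 0, …, F (N-1)` partitions the edge set of `G`. -/
def IsDecompOn {V : Type*} (G : SimpleGraph V) (F : ℕ → SimpleGraph V) (N : ℕ) : Prop :=
  (∀ i < N, F i ≤ G) ∧
  (∀ i < N, ∀ j < N, i ≠ j → Disjoint (F i).edgeSet (F j).edgeSet) ∧
  G.edgeSet = ⋃ i ∈ Set.Iio N, (F i).edgeSet

/-- A Hamilton–Waterloo decomposition of a graph `G` into `α` `C_m`-factors
and `β` `C_n`-factors. -/
def IsHWGraph {V : Type*} (G : SimpleGraph V) (m n α β : ℕ) : Prop :=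
  ∃ F : ℕ → SimpleGraph V, IsDecompOn G F (α + β) ∧
    (∀ i < α, IsCycleFactor (F i) m) ∧
    (∀ i, α ≤ i → i < α + β → IsCycleFactor (F i) n)

/-- `HW v m n α β`: a partition of `E(K_v)` (for `v` odd) or of `E(K_v)` minus a
perfect matching (for `v` even) into `α` `C_m`-factors and `β` `C_n`-factors. -/
def HW (v m n α β : ℕ) : Prop :=
  ∃ I : SimpleGraph (Fin v),
    (Odd v → I = ⊥) ∧ (Even v → IsOneFactor I) ∧
    IsHWGraph ((⊤ : SimpleGraph (Fin v)) \ I) m n α β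

/-- The complete `u`-partite graph with parts of size `g`. -/
def Kpartite (u g : ℕ) : SimpleGraph (Fin u × Fin g) :=
  SimpleGraph.fromRel (fun a b => a.1 ≠ b.1)

/-- The Cayley graph on an additive group with connection set `S`. -/
def cayley (Γ : Type*) [AddGroup Γ] (S : Set Γ) : SimpleGraph Γ :=
  SimpleGraph.fromRel (fun a b => a - b ∈ S)


namespace HWaux

/-- Graph of a "successor" function: `a ~ b` iff `f a = b` or `f b = a` (and `a ≠ b`). -/
def GF {V : Type*} (f : V → V) : SimpleGraph V where
  Adj a b := a ≠ b ∧ (f a = b ∨ f b = a)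
  symm := ⟨fun a b h => ⟨h.1.symm, h.2.symm⟩⟩
  loopless := ⟨fun a h => h.1 rfl⟩

lemma GF_adj {V : Type*} (f : V → V) (a b : V) :
    (GF f).Adj a b ↔ a ≠ b ∧ (f a = b ∨ f b = a) := Iff.rfl

lemma GF_adj' {V : Type*} {f : V → V} {a b : V} (h1 : a ≠ b)
    (h2 : f a = b ∨ f b = a) : (GF f).Adj a b := ⟨h1, h2⟩

instance GF.adjDecidable {V : Type*} [DecidableEq V] (f : V → V) :
    DecidableRel (GF f).Adj :=
  fun a b => inferInstanceAs (Decidable (a ≠ b ∧ (f a = b ∨ f b = a)))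

instance sdiffTop.adjDecidable {V : Type*} [DecidableEq V] (f : V → V) :
    DecidableRel ((⊤ : SimpleGraph V) \ GF f).Adj :=
  fun a b => decidable_of_iff (a ≠ b ∧ ¬ (GF f).Adj a b)
    (by rw [sdiff_adj, top_adj])

lemma supp_eq_of {V : Type*} (H : SimpleGraph V) (v : V) (S : Set V)
    (hv : v ∈ S) (hr : ∀ w ∈ S, H.Reachable v w)
    (hc : ∀ a ∈ S, ∀ b, H.Adj a b → b ∈ S) :
    (H.connectedComponentMk v).supp = S := by
  have key : ∀ {a b : V}, H.Walk a b → a ∈ S → b ∈ S := by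
    intro a b p
    induction p with
    | nil => exact id
    | cons h p ih => exact fun ha => ih (hc _ ha _ h)
  ext w
  simp only [ConnectedComponent.mem_supp_iff, ConnectedComponent.eq]
  constructor
  · intro h
    obtain ⟨p⟩ := h.symm
    exact key p hv
  · intro hw
    exact (hr w hw).symm

end HWaux

namespace HWaux
variable {V : Type*} [DecidableEq V] [Fintype V]

section Three
variable (f : V → V) (h3 : ∀ v, f (f (f v)) = v) (hne : ∀ v, f v ≠ v)
include h3 hne

lemma hne2 : ∀ v, f (f v) ≠ v := fun v h =>
  hne v ((congrArg f h).symm.trans (h3 v))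

lemma hd3 : ∀ v, f v ≠ f (f v) := fun v h => by
  have h1 := congrArg (fun x => f (f x)) h
  simp only [h3] at h1
  exact hne v h1.symm

lemma inv3 : ∀ x y, f x = y → x = f (f y) := fun x y h =>
  (h3 x).symm.trans (by rw [h])

lemma nbr3 (v : V) : (GF f).neighborSet v = {f v, f (f v)} := by
  ext w
  simp only [mem_neighborSet, GF_adj, Set.mem_insert_iff, Set.mem_singleton_iff]
  constructor
  · rintro ⟨h1, (rfl | h2)⟩
    · exact Or.inl rfl
    · exact Or.inr (inv3 f h3 hne w v h2)
  · rintro (rfl | rfl)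
    · exact ⟨(hne v).symm, Or.inl rfl⟩
    · refine ⟨(hne2 f h3 hne v).symm, Or.inr (h3 v)⟩

end Three

theorem isCycleFactor3GF (f : V → V) (h3 : ∀ v, f (f (f v)) = v) (hne : ∀ v, f v ≠ v) :
    IsCycleFactor (GF f) 3 := by
  constructor
  · intro v
    rw [nbr3 f h3 hne v]
    exact Set.ncard_pair (hd3 f h3 hne v)
  · intro v
    have hS : ((GF f).connectedComponentMk v).supp = {v, f v, f (f v)} := by
      apply supp_eq_of
      · exact Or.inl rfl
      · rintro w (rfl | rfl | rfl)
        · exact Reachable.refl w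
        · exact (GF_adj' (hne v).symm (Or.inl rfl)).reachable
        · exact ((GF_adj' (hne v).symm (Or.inl rfl)).reachable).trans
            ((GF_adj' (hd3 f h3 hne v) (Or.inl rfl)).reachable)
      · have hst : ∀ a ∈ ({v, f v, f (f v)} : Set V), ∀ b,
            (b = f a ∨ b = f (f a)) → b ∈ ({v, f v, f (f v)} : Set V) := by
          rintro a (rfl | rfl | rfl) b (rfl | rfl) <;>
            simp only [Set.mem_insert_iff, Set.mem_singleton_iff, h3] <;> tauto
        intro a ha b hb
        rw [GF_adj] at hb
        obtain ⟨hab, hfa | hfb⟩ := hb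
        · exact hst a ha b (Or.inl hfa.symm)
        · exact hst a ha b (Or.inr (inv3 f h3 hne b a hfb))
    rw [hS]
    rw [Set.ncard_insert_of_notMem (by
      simp only [Set.mem_insert_iff, Set.mem_singleton_iff]
      push_neg
      exact ⟨(hne v).symm, (hne2 f h3 hne v).symm⟩) (Set.toFinite _)]
    rw [Set.ncard_pair (hd3 f h3 hne v)]

theorem isOneFactorGF (m : V → V) (h2 : ∀ v, m (m v) = v) (hne : ∀ v, m v ≠ v) :
    IsOneFactor (GF m) := by
  intro v
  have : (GF m).neighborSet v = {m v} := by
    ext w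
    simp only [mem_neighborSet, GF_adj, Set.mem_singleton_iff]
    constructor
    · rintro ⟨h1, (rfl | hw)⟩
      · rfl
      · exact (h2 w).symm.trans (congrArg m hw)
    · rintro rfl
      exact ⟨(hne v).symm, Or.inl rfl⟩
  rw [this, Set.ncard_singleton]

end HWaux

def HWt0 : Fin 24 → Fin 24 := ![15, 11, 0, 4, 23, 10, 20, 17, 16, 6, 13, 21, 18, 5, 12, 2, 19, 22, 14, 8, 9, 1, 7, 3]
def HWt1 : Fin 24 → Fin 24 := ![3, 6, 22, 16, 17, 9, 15, 11, 23, 19, 8, 12, 7, 18, 4, 1, 0, 14, 21, 5, 2, 13, 20, 10]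
def HWt2 : Fin 24 → Fin 24 := ![8, 22, 5, 13, 10, 21, 4, 18, 11, 14, 6, 0, 1, 17, 23, 19, 7, 3, 16, 20, 15, 2, 12, 9]
def HWt3 : Fin 24 → Fin 24 := ![1, 10, 9, 2, 12, 14, 22, 21, 6, 3, 0, 16, 19, 11, 20, 7, 13, 23, 17, 4, 5, 15, 8, 18]
def HWt4 : Fin 24 → Fin 24 := ![21, 7, 1, 12, 13, 23, 16, 2, 9, 18, 17, 10, 20, 22, 6, 5, 14, 11, 8, 0, 3, 19, 4, 15]
def HWt5 : Fin 24 → Fin 24 := ![22, 19, 16, 8, 11, 3, 12, 23, 5, 15, 9, 20, 21, 7, 0, 10, 17, 2, 1, 18, 4, 6, 14, 13]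
def HWt6 : Fin 24 → Fin 24 := ![17, 20, 12, 10, 8, 6, 7, 5, 21, 0, 18, 19, 13, 2, 11, 16, 22, 9, 3, 14, 23, 4, 15, 1]
def HWt7 : Fin 24 → Fin 24 := ![6, 17, 11, 22, 7, 12, 23, 9, 1, 4, 20, 18, 16, 14, 15, 13, 5, 8, 2, 3, 21, 10, 19, 0]
def HWt8 : Fin 24 → Fin 24 := ![13, 16, 10, 11, 5, 18, 3, 8, 14, 1, 19, 6, 15, 20, 7, 17, 9, 12, 4, 2, 0, 22, 23, 21]
def HWq0 : Fin 24 → Fin 24 := ![4, 5, 6, 7, 1, 0, 19, 10, 12, 13, 14, 15, 9, 8, 3, 18, 20, 21, 22, 23, 17, 16, 11, 2]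
def HWq1 : Fin 24 → Fin 24 := ![18, 14, 4, 1, 15, 11, 13, 0, 2, 22, 12, 9, 23, 19, 21, 8, 10, 6, 20, 17, 7, 3, 5, 16]

namespace HWaux

section Four
variable {V : Type*} [DecidableEq V] [Fintype V]
variable (f : V → V) (h4 : ∀ v, f (f (f (f v))) = v)
  (hne : ∀ v, f v ≠ v) (hne2 : ∀ v, f (f v) ≠ v)
include h4 hne hne2

lemma hne3' : ∀ v, f (f (f v)) ≠ v := fun v h => by
  have h1 := congrArg f h
  rw [h4 v] at h1
  exact hne v h1.symm

lemma inv4 : ∀ x y, f x = y → x = f (f (f y)) := fun x y h =>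
  (h4 x).symm.trans (by rw [h])

lemma hd41 : ∀ v, f v ≠ f (f v) := fun v h => by
  have h1 := congrArg (fun x => f (f (f x))) h
  simp only [h4] at h1
  exact hne v h1.symm

lemma hd42 : ∀ v, f v ≠ f (f (f v)) := fun v h => by
  have h1 := congrArg f h
  rw [h4 v] at h1
  exact hne2 v h1

lemma hd43 : ∀ v, f (f v) ≠ f (f (f v)) := fun v h => by
  have h1 := congrArg (fun x => f (f x)) h
  simp only [h4] at h1
  exact hne v h1.symm

lemma nbr4 (v : V) : (GF f).neighborSet v = {f v, f (f (f v))} := by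
  ext w
  simp only [mem_neighborSet, GF_adj, Set.mem_insert_iff, Set.mem_singleton_iff]
  constructor
  · rintro ⟨h1, (rfl | h2)⟩
    · exact Or.inl rfl
    · exact Or.inr (inv4 f h4 hne hne2 w v h2)
  · rintro (rfl | rfl)
    · exact ⟨(hne v).symm, Or.inl rfl⟩
    · exact ⟨(hne3' f h4 hne hne2 v).symm, Or.inr (h4 v)⟩

theorem isCycleFactor4GF : IsCycleFactor (GF f) 4 := by
  constructor
  · intro v
    rw [nbr4 f h4 hne hne2 v]
    exact Set.ncard_pair (hd42 f h4 hne hne2 v)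
  · intro v
    have hS : ((GF f).connectedComponentMk v).supp = {v, f v, f (f v), f (f (f v))} := by
      apply supp_eq_of
      · exact Or.inl rfl
      · have r1 : (GF f).Reachable v (f v) := Adj.reachable ⟨(hne v).symm, Or.inl rfl⟩
        have r2 : (GF f).Reachable (f v) (f (f v)) :=
          Adj.reachable ⟨(hne (f v)).symm, Or.inl rfl⟩
        have r3 : (GF f).Reachable (f (f v)) (f (f (f v))) :=
          Adj.reachable ⟨(hne (f (f v))).symm, Or.inl rfl⟩
        rintro w (rfl | rfl | rfl | rfl)
        · exact Reachable.refl w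
        · exact r1
        · exact r1.trans r2
        · exact (r1.trans r2).trans r3
      · have hst : ∀ a ∈ ({v, f v, f (f v), f (f (f v))} : Set V), ∀ b,
            (b = f a ∨ b = f (f (f a))) → b ∈ ({v, f v, f (f v), f (f (f v))} : Set V) := by
          rintro a (rfl | rfl | rfl | rfl) b (rfl | rfl) <;>
            simp only [Set.mem_insert_iff, Set.mem_singleton_iff, h4] <;> tauto
        intro a ha b hb
        rw [GF_adj] at hb
        obtain ⟨hab, hfa | hfb⟩ := hb
        · exact hst a ha b (Or.inl hfa.symm)
        · exact hst a ha b (Or.inr (inv4 f h4 hne hne2 b a hfb))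
    rw [hS]
    have d1 : v ∉ ({f v, f (f v), f (f (f v))} : Set V) := by
      simp only [Set.mem_insert_iff, Set.mem_singleton_iff]
      push_neg
      exact ⟨(hne v).symm, (hne2 v).symm, (hne3' f h4 hne hne2 v).symm⟩
    have d2 : f v ∉ ({f (f v), f (f (f v))} : Set V) := by
      simp only [Set.mem_insert_iff, Set.mem_singleton_iff]
      push_neg
      exact ⟨hd41 f h4 hne hne2 v, hd42 f h4 hne hne2 v⟩
    rw [Set.ncard_insert_of_notMem d1 (Set.toFinite _),
      Set.ncard_insert_of_notMem d2 (Set.toFinite _),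
      Set.ncard_pair (hd43 f h4 hne hne2 v)]

end Four

lemma edge_disjoint_of {V : Type*} (G H : SimpleGraph V)
    (h : ∀ a b, ¬(G.Adj a b ∧ H.Adj a b)) : Disjoint G.edgeSet H.edgeSet := by
  rw [Set.disjoint_left]
  intro e he he'
  induction e using Sym2.ind with
  | _ a b => exact h a b ⟨he, he'⟩

/-- Matching function: `v ↦ v + 12`. -/
def HWm : Fin 24 → Fin 24 := fun v => v + 12

/-- Table of the 11 successor functions. -/
def TAB : Fin 11 → Fin 24 → Fin 24 :=
  ![HWt0, HWt1, HWt2, HWt3, HWt4, HWt5, HWt6, HWt7, HWt8, HWq0, HWq1]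

/-- The factors. -/
def FF : ℕ → SimpleGraph (Fin 24) :=
  fun n => if h : n < 11 then GF (TAB ⟨n, h⟩) else ⊥

lemma FF_eq (i : ℕ) (h : i < 11) : FF i = GF (TAB ⟨i, h⟩) := dif_pos h

end HWaux

set_option maxHeartbeats 4000000 in
open HWaux in
theorem stmt_2 : HW 24 3 4 9 2 := by
  refine ⟨GF HWm, fun h => absurd h (by decide), fun _ => isOneFactorGF HWm (by decide) (by decide), ?_⟩
  have hle : ∀ k : Fin 11, ∀ a b : Fin 24,
      (GF (TAB k)).Adj a b → ((⊤ : SimpleGraph (Fin 24)) \ GF HWm).Adj a b := by decide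
  refine ⟨FF, ⟨?_, ?_, ?_⟩, ?_, ?_⟩
  · intro i hi
    rw [FF_eq i hi]
    intro a b hab
    exact hle ⟨i, hi⟩ a b hab
  · have key : ∀ i j : Fin 11, i ≠ j → ∀ a b : Fin 24,
        ¬((GF (TAB i)).Adj a b ∧ (GF (TAB j)).Adj a b) := by decide
    intro i hi j hj hij
    rw [FF_eq i hi, FF_eq j hj]
    exact edge_disjoint_of _ _ (key ⟨i, hi⟩ ⟨j, hj⟩ (Fin.ne_of_val_ne hij))
  · have key1 : ∀ a b : Fin 24, ((⊤ : SimpleGraph (Fin 24)) \ GF HWm).Adj a b →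
        ∃ k : Fin 11, (GF (TAB k)).Adj a b := by decide
    ext e
    induction e using Sym2.ind with
    | _ a b =>
      simp only [mem_edgeSet, Set.mem_iUnion, Set.mem_Iio, exists_prop]
      constructor
      · intro h
        obtain ⟨k, hk⟩ := key1 a b h
        exact ⟨k.val, k.isLt, by rw [FF_eq k.val k.isLt]; exact hk⟩
      · rintro ⟨i, hi, h⟩
        rw [FF_eq i hi] at h
        exact hle ⟨i, hi⟩ a b h
  · intro i hi
    interval_cases i
    · exact isCycleFactor3GF HWt0 (by decide) (by decide)
    · exact isCycleFactor3GF HWt1 (by decide) (by decide)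
    · exact isCycleFactor3GF HWt2 (by decide) (by decide)
    · exact isCycleFactor3GF HWt3 (by decide) (by decide)
    · exact isCycleFactor3GF HWt4 (by decide) (by decide)
    · exact isCycleFactor3GF HWt5 (by decide) (by decide)
    · exact isCycleFactor3GF HWt6 (by decide) (by decide)
    · exact isCycleFactor3GF HWt7 (by decide) (by decide)
    · exact isCycleFactor3GF HWt8 (by decide) (by decide)
  · intro i hi1 hi2
    interval_cases i
    · exact isCycleFactor4GF HWq0 (by decide) (by decide) (by decide)
    · exact isCycleFactor4GF HWq1 (by decide) (by decide) (by decide)
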